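/- arXiv:2008.03061 — 2 statements merged into one kernel-verified Lean document; each statement's English description precedes it below -/
import Mathlib

section
/- Let G be a graph admitting an HC-tree of DC-cost W, and let k ≥ 1. Then the graph G^{(k)} (the disjoint union of k copies of G) admits an HC-tree of DC-cost exactly k²·W. In particular, the maximum DC-cost over HC-trees of G^{(k)} is at least k² times the maximum DC-cost over HC-trees of G. -/
/-- A rooted binary tree whose leaves are labelled by vertices of type `V`.
Every internal node has exactly two children. -/
inductive HCTree (V : Type) where
  | leaf : V → HCTree V
  | node : HCTree V → HCTree V → HCTree V

namespace HCTree

/-- The list of leaf labels of an HC-tree, from left to right. -/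
def leaves {V : Type} : HCTree V → List V
  | leaf v => [v]
  | node l r => leaves l ++ leaves r

open Classical in
/-- The Dasgupta cost of an HC-tree on a graph `G`: the sum over all edges `uv` of `G`
of the number of leaves of the subtree rooted at the least common ancestor of `u` and `v`.
Equivalently (as computed here, recursively), at each internal node we add
(number of leaves below the node) times (number of edges split at that node). -/
noncomputable def dcCost {V : Type} (G : SimpleGraph V) : HCTree V → ℕ
  | leaf _ => 0
  | node l r =>
      dcCost G l + dcCost G r +
        (l.leaves.length + r.leaves.length) *
          (l.leaves.map (fun u => r.leaves.countP (fun v => decide (G.Adj u v)))).sum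

end HCTree

open HCTree

/-- `T` together with the implicit leaf labelling is an HC-tree of a graph on vertex set `V`:
the leaf labels are pairwise distinct and every vertex occurs as a leaf label,
i.e. the labelling is a bijection between `V` and the leaves of `T`. -/
def IsHCTree {V : Type} (T : HCTree V) : Prop :=
  T.leaves.Nodup ∧ ∀ v : V, v ∈ T.leaves

/-- `W` is the maximum DC-cost over all HC-trees of `G`. -/
def IsMaxCost {V : Type} (G : SimpleGraph V) (W : ℕ) : Prop :=
  (∃ T : HCTree V, IsHCTree T ∧ dcCost G T = W) ∧
  ∀ T : HCTree V, IsHCTree T → dcCost G T ≤ W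

/-- `W` is the minimum DC-cost over all HC-trees of `G`. -/
def IsMinCost {V : Type} (G : SimpleGraph V) (W : ℕ) : Prop :=
  (∃ T : HCTree V, IsHCTree T ∧ dcCost G T = W) ∧
  ∀ T : HCTree V, IsHCTree T → W ≤ dcCost G T

/-- The disjoint union `G^(k)` of `k` copies of `G`, on vertex set `V × Fin k`. -/
def copies {V : Type} (G : SimpleGraph V) (k : ℕ) : SimpleGraph (V × Fin k) where
  Adj a b := a.2 = b.2 ∧ G.Adj a.1 b.1
  symm := ⟨fun _ _ h => ⟨h.1.symm, h.2.symm⟩⟩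
  loopless := ⟨fun a h => G.irrefl h.2⟩

namespace HCAux

open HCTree

/-- A caterpillar tree with leaves `a :: l`. -/
def ofNeList {α : Type} (a : α) : List α → HCTree α
  | [] => HCTree.leaf a
  | b :: l => HCTree.node (HCTree.leaf a) (ofNeList b l)

theorem leaves_ofNeList {α : Type} (a : α) (l : List α) :
    (ofNeList a l).leaves = a :: l := by
  induction l generalizing a with
  | nil => rfl
  | cons b l ih => simp [ofNeList, leaves, ih]

open Classical in
theorem dcCost_eq_zero {W : Type} (H : SimpleGraph W) (S : HCTree W)
    (h : ∀ u ∈ S.leaves, ∀ v ∈ S.leaves, ¬ H.Adj u v) : dcCost H S = 0 := by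
  induction S with
  | leaf v => rfl
  | node l r ihl ihr =>
    have hl : dcCost H l = 0 :=
      ihl (fun u hu v hv => h u (by simp [leaves, hu]) v (by simp [leaves, hv]))
    have hr : dcCost H r = 0 :=
      ihr (fun u hu v hv => h u (by simp [leaves, hu]) v (by simp [leaves, hv]))
    have hs : (l.leaves.map (fun u => r.leaves.countP (fun v => decide (H.Adj u v)))).sum = 0 := by
      apply List.sum_eq_zero
      intro x hx
      obtain ⟨u, hu, rfl⟩ := List.mem_map.1 hx
      rw [List.countP_eq_zero]
      intro v hv
      simpa using h u (by simp [leaves, hu]) v (by simp [leaves, hv])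
    simp [dcCost, hl, hr, hs]

variable {V : Type} (n : ℕ)

/-- The `n+1` copies of a vertex. -/
def F (v : V) : List (V × Fin (n + 1)) := (List.finRange (n + 1)).map (fun i => (v, i))

/-- A tree whose leaves are the `n+1` copies of `v`. -/
def blob (v : V) : HCTree (V × Fin (n + 1)) :=
  ofNeList (v, 0) ((List.finRange n).map (fun i => (v, i.succ)))

theorem leaves_blob (v : V) : (blob n v).leaves = F n v := by
  simp [blob, leaves_ofNeList, F, List.finRange_succ, List.map_map, Function.comp]

/-- Replace each leaf of `T` by a blob of `n+1` copies. -/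
def expand : HCTree V → HCTree (V × Fin (n + 1))
  | HCTree.leaf v => blob n v
  | HCTree.node l r => HCTree.node (expand l) (expand r)

theorem leaves_expand (T : HCTree V) :
    (expand n T).leaves = T.leaves.flatMap (F n) := by
  induction T with
  | leaf v => simp [expand, leaves, leaves_blob]
  | node l r ihl ihr => simp [expand, leaves, ihl, ihr]

theorem length_bindF (A : List V) : (A.flatMap (F n)).length = (n + 1) * A.length := by
  induction A with
  | nil => simp
  | cons a A ih => simp [List.flatMap_cons, ih, F, Nat.mul_succ, Nat.mul_add]; ring

open Classical in
theorem countP_F (G : SimpleGraph V) (u b : V) (i : Fin (n + 1)) :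
    (F n b).countP (fun x => decide ((copies G (n + 1)).Adj (u, i) x))
      = if G.Adj u b then 1 else 0 := by
  classical
  rw [F, List.countP_map]
  by_cases h : G.Adj u b
  · simp only [h, if_true]
    have : ((fun x => decide ((copies G (n + 1)).Adj (u, i) x)) ∘ fun j => (b, j))
        = fun j : Fin (n + 1) => decide (i = j) := by
      funext j
      simp [copies, h, Function.comp]
    rw [this]
    have : (List.finRange (n + 1)).countP (fun j : Fin (n + 1) => decide (i = j))
        = (List.finRange (n + 1)).count i := by
      rw [List.count]
      apply List.countP_congr
      intro j _
      simp [eq_comm, BEq.beq]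
    rw [this, List.count_eq_one_of_mem (List.nodup_finRange _) (List.mem_finRange i)]
  · simp only [h, if_false]
    rw [List.countP_eq_zero]
    intro j _
    simp [copies, h]

open Classical in
theorem countP_bindF (G : SimpleGraph V) (u : V) (i : Fin (n + 1)) (B : List V) :
    (B.flatMap (F n)).countP (fun x => decide ((copies G (n + 1)).Adj (u, i) x))
      = B.countP (fun v => decide (G.Adj u v)) := by
  induction B with
  | nil => rfl
  | cons b B ih =>
    rw [List.flatMap_cons, List.countP_append, ih, List.countP_cons, countP_F]
    by_cases h : G.Adj u b <;> simp [h, Nat.add_comm]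

open Classical in
theorem sum_bindF (h : V → ℕ) (A : List V) :
    ((A.flatMap (F n)).map (fun p => h p.1)).sum = (n + 1) * (A.map h).sum := by
  induction A with
  | nil => simp
  | cons a A ih =>
    rw [List.flatMap_cons, List.map_append, List.sum_append, ih]
    have h1 : ((F n a).map (fun p => h p.1)) = List.replicate (n + 1) (h a) := by
      rw [F, List.map_map]
      have : ((fun p : V × Fin (n + 1) => h p.1) ∘ fun i => (a, i)) = fun _ => h a := rfl
      rw [this, List.map_const', List.length_finRange]
    rw [h1, List.sum_replicate, smul_eq_mul, List.map_cons, List.sum_cons]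
    ring

open Classical in
theorem dcCost_expand (G : SimpleGraph V) (T : HCTree V) :
    dcCost (copies G (n + 1)) (expand n T) = (n + 1) ^ 2 * dcCost G T := by
  induction T with
  | leaf v =>
    rw [show dcCost G (HCTree.leaf v) = 0 from rfl, Nat.mul_zero]
    apply dcCost_eq_zero
    intro u hu w hw
    rw [expand, leaves_blob] at hu hw
    obtain ⟨i, _, rfl⟩ := List.mem_map.1 hu
    obtain ⟨j, _, rfl⟩ := List.mem_map.1 hw
    intro hadj
    exact G.irrefl hadj.2
  | node l r ihl ihr =>
    rw [show expand n (HCTree.node l r) = HCTree.node (expand n l) (expand n r) from rfl]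
    rw [dcCost, ihl, ihr, leaves_expand, leaves_expand, length_bindF, length_bindF]
    have hfun : (fun u' : V × Fin (n + 1) =>
        (r.leaves.flatMap (F n)).countP (fun v' => decide ((copies G (n + 1)).Adj u' v')))
        = fun p : V × Fin (n + 1) =>
          (fun u => r.leaves.countP (fun v => decide (G.Adj u v))) p.1 := by
      funext p
      exact countP_bindF n G p.1 p.2 r.leaves
    rw [hfun, sum_bindF n (fun u => r.leaves.countP (fun v => decide (G.Adj u v)))]
    rw [dcCost]
    ring

theorem isHCTree_expand (T : HCTree V) (hT : IsHCTree T) : IsHCTree (expand n T) := by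
  obtain ⟨hnd, hmem⟩ := hT
  constructor
  · rw [leaves_expand]
    rw [List.nodup_flatMap]
    refine ⟨fun v _ => ?_, ?_⟩
    · exact (List.nodup_finRange _).map (fun i j h => (Prod.mk.injEq _ _ _ _ ▸ h).2)
    · refine List.Pairwise.imp ?_ hnd
      intro v w hvw x hx hx'
      obtain ⟨i, _, rfl⟩ := List.mem_map.1 hx
      obtain ⟨j, _, hj⟩ := List.mem_map.1 hx'
      exact hvw ((Prod.mk.injEq _ _ _ _ ▸ hj).1.symm)
  · rintro ⟨v, i⟩
    rw [leaves_expand, List.mem_flatMap]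
    exact ⟨v, hmem v, by simp [F]⟩

end HCAux

open HCAux in
/-- If `G` admits an HC-tree of DC-cost `W` and `k ≥ 1`, then the
disjoint union `G^(k)` of `k` copies of `G` admits an HC-tree of DC-cost exactly `k² W`.
In particular the maximum DC-cost over HC-trees of `G^(k)` is at least `k²` times the
maximum DC-cost over HC-trees of `G`. -/
theorem copies_dcCost_exists {V : Type} (G : SimpleGraph V) (W : ℕ)
    (T : HCTree V) (hT : IsHCTree T) (hW : dcCost G T = W) (k : ℕ) (hk : 1 ≤ k) :
    (∃ T' : HCTree (V × Fin k), IsHCTree T' ∧ dcCost (copies G k) T' = k ^ 2 * W) ∧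
    (∀ Wmax Wkmax : ℕ, IsMaxCost G Wmax → IsMaxCost (copies G k) Wkmax →
      k ^ 2 * Wmax ≤ Wkmax) := by
  obtain ⟨n, rfl⟩ : ∃ n, k = n + 1 := ⟨k - 1, by omega⟩
  refine ⟨⟨expand n T, isHCTree_expand n T hT, by rw [dcCost_expand, hW]⟩, ?_⟩
  rintro Wmax Wkmax ⟨⟨T0, hT0, hc0⟩, -⟩ ⟨-, hub⟩
  have h := hub (expand n T0) (isHCTree_expand n T0 hT0)
  rwa [dcCost_expand, hc0] at h
end

section
/- The complete split graph Q_{2,3} is not max-well-behaved: the disjoint union of two copies of Q_{2,3} admits an HC-tree of DC-cost 130, which is strictly greater than 2² · 32 = 128, where 32 is the maximum DC-cost over all HC-trees of Q_{2,3}. -/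
open HCTree

/-- The complete split graph `Q_{2,3}`: vertices `0,1,2` form an independent set
(the `s_i`), vertices `3,4` form a clique (the `c_j`), and every `s_i` is adjacent to
every `c_j`.  Its edges are exactly `c1c2` and the six edges `s_i c_j`. -/
def Q23 : SimpleGraph (Fin 5) :=
  SimpleGraph.fromRel (fun a b => 3 ≤ a.val ∨ 3 ≤ b.val)




/- ### Auxiliary machinery -/

/-- Computable analogue of `dcCost` for a Boolean adjacency function. -/
def costF {V : Type} (f : V → V → Bool) : HCTree V → ℕ
  | .leaf _ => 0
  | .node l r =>
      costF f l + costF f r +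
        (l.leaves.length + r.leaves.length) *
          (l.leaves.map (fun u => r.leaves.countP (fun v => f u v))).sum

lemma dcCost_eq_costF {V : Type} (G : SimpleGraph V) (f : V → V → Bool)
    (h : ∀ u v, G.Adj u v ↔ f u v = true) : ∀ T, dcCost G T = costF f T := by
  have hf : ∀ u v, (@decide (G.Adj u v) (Classical.propDecidable _)) = f u v := by
    intro u v
    rcases Bool.dichotomy (f u v) with hb | hb
    · rw [hb]; exact @decide_eq_false _ (Classical.propDecidable _)
        (fun hA => by simp [h u v, hb] at hA)
    · rw [hb]; exact @decide_eq_true _ (Classical.propDecidable _) ((h u v).mpr hb)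
  intro T
  induction T with
  | leaf v => rfl
  | node l r ihl ihr => simp [dcCost, costF, ihl, ihr, hf]

/-- All ways to split a list into a nonempty prefix and the rest. -/
def splitsAux {V : Type} : List V → List (List V × List V)
  | [] => []
  | a :: l => ([a], l) :: (splitsAux l).map (fun p => (a :: p.1, p.2))

lemma mem_splitsAux {V : Type} : ∀ (a b : List V), a ≠ [] → (a, b) ∈ splitsAux (a ++ b) := by
  intro a
  induction a with
  | nil => intro b h; exact absurd rfl h
  | cons x a ih =>
    intro b _
    cases a with
    | nil => simp [splitsAux]
    | cons y a' =>
      exact List.mem_cons_of_mem _ (List.mem_map.mpr ⟨(y :: a', b), ih b (by simp), rfl⟩)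

/-- Fuel-based enumeration of all HC-trees with a prescribed leaf list. -/
def treesOfF {V : Type} : ℕ → List V → List (HCTree V)
  | 0, l => match l with | [v] => [.leaf v] | _ => []
  | n+1, l =>
      (match l with | [v] => [.leaf v] | _ => []) ++
      (splitsAux l).flatMap
        (fun p => (treesOfF n p.1).flatMap
          (fun L => (treesOfF n p.2).map (fun R => .node L R)))

lemma leaves_ne_nil {V : Type} : ∀ T : HCTree V, T.leaves ≠ [] := by
  intro T
  induction T with
  | leaf v => simp [leaves]
  | node l r ihl ihr => simp [leaves, ihl]

lemma mem_treesOfF {V : Type} :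
    ∀ (T : HCTree V) (n : ℕ), T.leaves.length ≤ n + 1 → T ∈ treesOfF n T.leaves := by
  intro T
  induction T with
  | leaf v =>
    intro n _
    cases n <;> simp [treesOfF, leaves]
  | node l r ihl ihr =>
    intro n hn
    have hl1 : 1 ≤ l.leaves.length := List.length_pos_iff.mpr (leaves_ne_nil l)
    have hr1 : 1 ≤ r.leaves.length := List.length_pos_iff.mpr (leaves_ne_nil r)
    have hlen : (node l r).leaves.length = l.leaves.length + r.leaves.length := by
      simp [leaves]
    cases n with
    | zero => omega
    | succ m =>
      have hml : l.leaves.length ≤ m + 1 := by omega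
      have hmr : r.leaves.length ≤ m + 1 := by omega
      show node l r ∈ treesOfF (m+1) (l.leaves ++ r.leaves)
      refine List.mem_append_right _ ?_
      refine List.mem_flatMap.mpr ⟨(l.leaves, r.leaves),
        mem_splitsAux _ _ (leaves_ne_nil l), ?_⟩
      exact List.mem_flatMap.mpr ⟨l, ihl m hml, List.mem_map.mpr ⟨r, ihr m hmr, rfl⟩⟩

/-- Boolean adjacency of `Q23`. -/
def adjB (u v : Fin 5) : Bool := decide (u ≠ v ∧ (3 ≤ u.val ∨ 3 ≤ v.val))

/-- Boolean adjacency of two disjoint copies of `Q23`. -/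
def adj2B (a b : Fin 5 × Fin 2) : Bool := decide (a.2 = b.2) && adjB a.1 b.1

lemma Q23_adj_iff : ∀ u v, Q23.Adj u v ↔ adjB u v = true := by
  intro u v
  simp only [Q23, SimpleGraph.fromRel_adj, adjB, decide_eq_true_eq]
  tauto

lemma copies2_adj_iff : ∀ a b, (copies Q23 2).Adj a b ↔ adj2B a b = true := by
  intro a b
  show (a.2 = b.2 ∧ Q23.Adj a.1 b.1) ↔ _
  simp only [adj2B, Bool.and_eq_true, decide_eq_true_eq, Q23_adj_iff]

set_option maxRecDepth 10000 in
lemma bigcheck : ∀ a b c d e : Fin 5, List.Nodup [a,b,c,d,e] →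
    ((treesOfF 4 [a,b,c,d,e]).all (fun T => costF adjB T ≤ 32)) = true := by decide

/-- An HC-tree of `Q23` of cost 32. -/
def T32 : HCTree (Fin 5) :=
  .node (.node (.node (.node (.leaf 0) (.leaf 1)) (.leaf 2)) (.leaf 3)) (.leaf 4)

/-- An HC-tree of the disjoint union of two copies of `Q23` of cost 130. -/
def T130 : HCTree (Fin 5 × Fin 2) :=
  .node
    (.node
      (.node (.node (.leaf (4,0)) (.leaf (0,1))) (.leaf (1,1)))
      (.node (.leaf (3,0)) (.leaf (2,1))))
    (.node
      (.node (.node (.node (.leaf (0,0)) (.leaf (1,0))) (.leaf (2,0))) (.leaf (3,1)))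
      (.leaf (4,1)))

set_option maxHeartbeats 1000000 in
/-- `Q_{2,3}` is not max-well-behaved: while 32 is the maximum DC-cost
over all HC-trees of `Q_{2,3}`, the disjoint union of two copies of `Q_{2,3}` admits an
HC-tree of DC-cost 130, which is strictly greater than `2² · 32 = 128`. -/
theorem Q23_not_maxWellBehaved :
    IsMaxCost Q23 32 ∧
    (∃ T : HCTree (Fin 5 × Fin 2), IsHCTree T ∧ dcCost (copies Q23 2) T = 130) ∧
    2 ^ 2 * 32 < 130 := by
  refine ⟨⟨⟨T32, ⟨by decide, by decide⟩, ?_⟩, ?_⟩,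
    ⟨T130, ⟨by decide, by decide⟩, ?_⟩, by norm_num⟩
  · rw [dcCost_eq_costF Q23 adjB Q23_adj_iff]; decide
  · intro T hT
    rw [dcCost_eq_costF Q23 adjB Q23_adj_iff]
    have hnd := hT.1
    have hfin : T.leaves.toFinset = Finset.univ :=
      Finset.eq_univ_iff_forall.mpr (fun v => List.mem_toFinset.mpr (hT.2 v))
    have hlen : T.leaves.length = 5 := by
      have := List.toFinset_card_of_nodup hnd
      rw [hfin] at this
      simpa using this.symm
    have hmem : T ∈ treesOfF 4 T.leaves := mem_treesOfF T 4 (by omega)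
    rcases hL : T.leaves with _ | ⟨a, _ | ⟨b, _ | ⟨c, _ | ⟨d, _ | ⟨e, _ | ⟨f, tl⟩⟩⟩⟩⟩⟩ <;>
      rw [hL] at hlen <;> simp only [List.length_cons, List.length_nil] at hlen
    · omega
    · omega
    · omega
    · omega
    · omega
    · rw [hL] at hmem hnd
      exact of_decide_eq_true (List.all_eq_true.mp (bigcheck a b c d e hnd) T hmem)
    · omega
  · rw [dcCost_eq_costF (copies Q23 2) adj2B copies2_adj_iff]; decide
end
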